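/- With the setup of Neyman's variance formula (complete randomization, difference-in-means τ̂), one has Var(τ̂) ≤ V₁²/n₁ + V₀²/n₀, with equality if and only if y_i(1) − y_i(0) is constant across i. -/

import Mathlib

open Finset

private lemma aux_count {α : Type*} [DecidableEq α] (s u : Finset α) (k : ℕ)
    (hu : u ⊆ s) (hk : u.card ≤ k) :
    ((s.powersetCard k).filter (fun t => u ⊆ t)).card = (s.card - u.card).choose (k - u.card) := by
  have h : ((s.powersetCard k).filter (fun t => u ⊆ t)).card
      = ((s \ u).powersetCard (k - u.card)).card := by
    apply Finset.card_bij' (fun t _ => t \ u) (fun t _ => t ∪ u)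
    · intro t ht
      simp only [mem_filter, mem_powersetCard] at ht
      simp only [mem_powersetCard]
      exact ⟨sdiff_subset_sdiff ht.1.1 (le_refl u), by rw [card_sdiff_of_subset ht.2, ht.1.2]⟩
    · intro t ht
      simp only [mem_powersetCard] at ht
      simp only [mem_filter, mem_powersetCard]
      refine ⟨⟨union_subset (ht.1.trans (sdiff_subset)) hu, ?_⟩, subset_union_right⟩
      rw [card_union_of_disjoint, ht.2]
      · omega
      · exact disjoint_of_subset_left ht.1 sdiff_disjoint
    · intro t ht
      simp only [mem_filter] at ht
      exact sdiff_union_of_subset ht.2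
    · intro t ht
      simp only [mem_powersetCard] at ht
      exact union_sdiff_cancel_right (disjoint_of_subset_left ht.1 sdiff_disjoint)
  rw [h, card_powersetCard, card_sdiff_of_subset hu]

private lemma aux_count_empty {α : Type*} [DecidableEq α] (s u : Finset α) (k : ℕ)
    (hk : k < u.card) :
    ((s.powersetCard k).filter (fun t => u ⊆ t)).card = 0 := by
  rw [card_eq_zero, filter_eq_empty_iff]
  intro t ht hsub
  simp only [mem_powersetCard] at ht
  have := card_le_card hsub
  omega

private lemma aux_single {n k : ℕ} (hk : 1 ≤ k) (i : Fin n) :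
    ((powersetCard k (univ : Finset (Fin n))).filter (fun t => i ∈ t)).card
    = (n-1).choose (k-1) := by
  have h := aux_count (univ : Finset (Fin n)) {i} k (by simp) (by simpa using hk)
  simpa [card_univ, singleton_subset_iff] using h

private lemma aux_pair {n k : ℕ} (i j : Fin n) (hij : i ≠ j) :
    (((powersetCard k (univ : Finset (Fin n))).filter (fun t => i ∈ t ∧ j ∈ t)).card : ℝ)
    = (if 2 ≤ k then ((n-2).choose (k-2) : ℝ) else 0) := by
  have hcard : ({i, j} : Finset (Fin n)).card = 2 := card_pair hij
  have hset : ∀ t : Finset (Fin n), (i ∈ t ∧ j ∈ t) ↔ ({i, j} : Finset (Fin n)) ⊆ t := by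
    intro t; simp [insert_subset_iff]
  simp only [hset]
  split_ifs with h
  · have := aux_count (univ : Finset (Fin n)) {i,j} k (by simp [insert_subset_iff]) (by omega)
    rw [hcard, card_univ, Fintype.card_fin] at this
    exact_mod_cast this
  · rw [aux_count_empty]
    · simp
    · rw [hcard]; omega

private lemma aux_sum1 {n k : ℕ} (hk : 1 ≤ k) (f : Fin n → ℝ) :
    ∑ S ∈ powersetCard k (univ : Finset (Fin n)), ∑ i ∈ S, f i
    = ((n-1).choose (k-1) : ℝ) * ∑ i, f i := by
  have step : ∀ S ∈ powersetCard k (univ : Finset (Fin n)),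
      ∑ i ∈ S, f i = ∑ i, if i ∈ S then f i else 0 := by
    intro S hS
    rw [← Finset.sum_filter, Finset.filter_univ_mem]
  rw [Finset.sum_congr rfl step, Finset.sum_comm]
  rw [Finset.mul_sum]
  apply Finset.sum_congr rfl
  intro i _
  rw [← Finset.sum_filter, Finset.sum_const, aux_single hk]
  simp [mul_comm]

private lemma aux_sum2 {n k : ℕ} (hk : 1 ≤ k) (f : Fin n → ℝ) :
    ∑ S ∈ powersetCard k (univ : Finset (Fin n)), (∑ i ∈ S, f i) ^ 2
    = ((n-1).choose (k-1) : ℝ) * ∑ i, (f i)^2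
      + (if 2 ≤ k then ((n-2).choose (k-2) : ℝ) else 0)
        * ((∑ i, f i)^2 - ∑ i, (f i)^2) := by
  set A : ℝ := ((n-1).choose (k-1) : ℝ)
  set B : ℝ := (if 2 ≤ k then ((n-2).choose (k-2) : ℝ) else 0)
  have step : ∀ S ∈ powersetCard k (univ : Finset (Fin n)),
      (∑ i ∈ S, f i)^2 = ∑ i, ∑ j, (if i ∈ S ∧ j ∈ S then f i * f j else 0) := by
    intro S hS
    have h1 : ∑ i ∈ S, f i = ∑ i, if i ∈ S then f i else 0 := by
      rw [← Finset.sum_filter, Finset.filter_univ_mem]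
    rw [h1, sq, Finset.sum_mul_sum]
    apply Finset.sum_congr rfl; intro i _
    apply Finset.sum_congr rfl; intro j _
    split_ifs with h1 h2 h3 <;> simp_all
  rw [Finset.sum_congr rfl step]
  rw [Finset.sum_comm]
  have step2 : ∀ i : Fin n,
      ∑ S ∈ powersetCard k (univ : Finset (Fin n)), ∑ j, (if i ∈ S ∧ j ∈ S then f i * f j else 0)
      = A * (f i)^2 + B * (f i * (∑ j, f j) - (f i)^2) := by
    intro i
    rw [Finset.sum_comm]
    have inner : ∀ j : Fin n,
        ∑ S ∈ powersetCard k (univ : Finset (Fin n)), (if i ∈ S ∧ j ∈ S then f i * f j else 0)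
        = (if j = i then A * (f i)^2 else B * (f i * f j)) := by
      intro j
      rw [← Finset.sum_filter, Finset.sum_const]
      by_cases hji : j = i
      · subst hji
        simp only [and_self]
        rw [aux_single hk, nsmul_eq_mul, if_pos trivial]
        simp only [A]
        ring
      · rw [if_neg hji]
        have := aux_pair (k := k) i j (fun h => hji h.symm)
        rw [nsmul_eq_mul, this]
    rw [Finset.sum_congr rfl (fun j _ => inner j)]
    rw [← Finset.add_sum_erase _ _ (mem_univ i), if_pos rfl]
    have h2 : ∑ j ∈ univ.erase i, (if j = i then A * (f i)^2 else B * (f i * f j))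
        = B * f i * (∑ j, f j - f i) := by
      rw [← Finset.sum_erase_eq_sub (mem_univ i), Finset.mul_sum]
      apply Finset.sum_congr rfl
      intro j hj
      rw [if_neg (Finset.ne_of_mem_erase hj)]; ring
    rw [h2]; ring
  rw [Finset.sum_congr rfl (fun i _ => step2 i)]
  rw [Finset.sum_add_distrib, ← Finset.mul_sum, ← Finset.mul_sum]
  congr 1
  rw [Finset.sum_sub_distrib, ← Finset.sum_mul, ← sq]

private lemma aux_transfer {n n₁ : ℕ} (F : Finset (Fin n) → ℝ) :
    ∑ a ∈ univ.filter (fun a : Fin n → Bool => (univ.filter (fun j => a j = true)).card = n₁),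
      F (univ.filter (fun j => a j = true))
    = ∑ S ∈ powersetCard n₁ (univ : Finset (Fin n)), F S := by
  apply Finset.sum_nbij' (fun a => univ.filter (fun j => a j = true))
    (fun S => fun i => decide (i ∈ S))
  · intro a ha
    simp only [mem_filter, mem_univ, true_and] at ha
    simp [mem_powersetCard, ha]
  · intro S hS
    simp only [mem_powersetCard] at hS
    simp only [mem_filter, mem_univ, true_and, decide_eq_true_eq]
    rw [show univ.filter (fun j => j ∈ S) = S by ext x; simp]
    exact hS.2
  · intro a ha
    funext i
    simp only [mem_filter, mem_univ, true_and, decide_eq_true_eq]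
    cases h : a i <;> simp [h]
  · intro S hS
    ext x; simp
  · intro a ha; rfl

private lemma aux_card_transfer {n n₁ : ℕ} :
    (univ.filter (fun a : Fin n → Bool => (univ.filter (fun j => a j = true)).card = n₁)).card
    = n.choose n₁ := by
  have h := aux_transfer (n := n) (n₁ := n₁) (fun _ => (1:ℝ))
  simp only [sum_const, nsmul_eq_mul, mul_one] at h
  have h2 : ((powersetCard n₁ (univ : Finset (Fin n))).card : ℝ) = (n.choose n₁ : ℝ) := by
    rw [card_powersetCard, card_univ, Fintype.card_fin]
  exact_mod_cast h.trans h2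

private lemma sum_sub_sq {α : Type*} (P : Finset α) (g : α → ℝ) (b : ℝ) :
    ∑ S ∈ P, (g S - b)^2
    = ∑ S ∈ P, (g S)^2 - 2*b*(∑ S ∈ P, g S) + (P.card : ℝ)*b^2 := by
  have h : ∀ S ∈ P, (g S - b)^2 = (g S)^2 - 2*b*g S + b^2 := fun S _ => by ring
  rw [Finset.sum_congr rfl h, Finset.sum_add_distrib, Finset.sum_sub_distrib,
    ← Finset.mul_sum, Finset.sum_const, nsmul_eq_mul]

private lemma aux_varsum {α : Type*} (P : Finset α) (g : α → ℝ) (N : ℝ) (hN : (P.card : ℝ) = N) :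
    (1/N) * ∑ S ∈ P, (g S - (1/N) * ∑ S' ∈ P, g S')^2
    = (1/N) * ∑ S ∈ P, (g S)^2 - ((1/N) * ∑ S ∈ P, g S)^2 := by
  rcases eq_or_ne N 0 with h | h
  · subst h; simp
  · rw [sum_sub_sq, hN]
    field_simp
    ring


set_option maxHeartbeats 2000000 in
open Finset in
/-- Conservativeness of the Neymanian variance bound: under complete
randomization, `Var(τ̂) ≤ V₁²/n₁ + V₀²/n₀`, with equality if and only if the
unit-level effects `yᵢ(1) − yᵢ(0)` are constant across units. -/
theorem neyman_variance_conservative {n n₁ : ℕ}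
    (hn₁pos : 0 < n₁) (hn₁lt : n₁ < n) (y1 y0 : Fin n → ℝ) :
    let n₀ : ℕ := n - n₁
    let D : Finset (Fin n → Bool) :=
      univ.filter (fun a => (univ.filter (fun j => a j = true)).card = n₁)
    let τhat : (Fin n → Bool) → ℝ := fun a =>
      (1 / (n₁ : ℝ)) * ∑ i ∈ univ.filter (fun i => a i = true), y1 i
        - (1 / (n₀ : ℝ)) * ∑ i ∈ univ.filter (fun i => a i = false), y0 i
    let ybar1 : ℝ := (1 / (n : ℝ)) * ∑ i, y1 i
    let ybar0 : ℝ := (1 / (n : ℝ)) * ∑ i, y0 i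
    let V1 : ℝ := (1 / ((n : ℝ) - 1)) * ∑ i, (y1 i - ybar1) ^ 2
    let V0 : ℝ := (1 / ((n : ℝ) - 1)) * ∑ i, (y0 i - ybar0) ^ 2
    let Var : ℝ := (1 / (D.card : ℝ)) * ∑ a ∈ D,
        (τhat a - (1 / (D.card : ℝ)) * ∑ a' ∈ D, τhat a') ^ 2
    Var ≤ V1 / (n₁ : ℝ) + V0 / (n₀ : ℝ)
    ∧ (Var = V1 / (n₁ : ℝ) + V0 / (n₀ : ℝ)
        ↔ ∃ c : ℝ, ∀ i, y1 i - y0 i = c) := by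
  intro n₀ D τhat ybar1 ybar0 V1 V0 Var
  have hn₀def : n₀ = n - n₁ := rfl
  have hDdef : D = univ.filter
      (fun a : Fin n → Bool => (univ.filter (fun j => a j = true)).card = n₁) := rfl
  have hτdef : ∀ a, τhat a =
      (1 / (n₁ : ℝ)) * ∑ i ∈ univ.filter (fun i => a i = true), y1 i
        - (1 / (n₀ : ℝ)) * ∑ i ∈ univ.filter (fun i => a i = false), y0 i := fun a => rfl
  have hyb1 : ybar1 = (1 / (n : ℝ)) * ∑ i, y1 i := rfl
  have hyb0 : ybar0 = (1 / (n : ℝ)) * ∑ i, y0 i := rfl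
  have hV1 : V1 = (1 / ((n : ℝ) - 1)) * ∑ i, (y1 i - ybar1) ^ 2 := rfl
  have hV0 : V0 = (1 / ((n : ℝ) - 1)) * ∑ i, (y0 i - ybar0) ^ 2 := rfl
  have hVardef : Var = (1 / (D.card : ℝ)) * ∑ a ∈ D,
      (τhat a - (1 / (D.card : ℝ)) * ∑ a' ∈ D, τhat a') ^ 2 := rfl
  clear_value n₀ D τhat ybar1 ybar0 V1 V0 Var
  -- basic facts
  have hn : 2 ≤ n := by omega
  have hn₀pos : 0 < n₀ := by omega
  have hMne : ((n₁:ℝ)) ≠ 0 := Nat.cast_ne_zero.mpr (by omega)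
  have hKne : ((n₀:ℝ)) ≠ 0 := Nat.cast_ne_zero.mpr (by omega)
  have hnne : ((n:ℝ)) ≠ 0 := Nat.cast_ne_zero.mpr (by omega)
  have hn2R : (2:ℝ) ≤ (n:ℝ) := by exact_mod_cast hn
  have hn1ne : ((n:ℝ) - 1) ≠ 0 := by linarith
  have hKcast : ((n₀:ℝ)) = (n:ℝ) - (n₁:ℝ) := by
    rw [hn₀def, Nat.cast_sub hn₁lt.le]
  have hNRne : ((n.choose n₁ : ℕ) : ℝ) ≠ 0 :=
    Nat.cast_ne_zero.mpr (Nat.choose_pos hn₁lt.le).ne'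
  -- choose identities
  have hAnat : n * (n-1).choose (n₁-1) = n.choose n₁ * n₁ := by
    have h := Nat.add_one_mul_choose_eq (n-1) (n₁-1)
    rwa [show n-1+1 = n by omega, show n₁-1+1 = n₁ by omega] at h
  have hAeq : (((n-1).choose (n₁-1) : ℕ) : ℝ) = (n₁:ℝ) * (n.choose n₁ : ℝ) / (n:ℝ) := by
    rw [eq_div_iff hnne]
    exact_mod_cast (by rw [mul_comm] at hAnat ⊢; linarith [hAnat] : ((n-1).choose (n₁-1)) * n = n₁ * (n.choose n₁) )
  have hBeq : (if 2 ≤ n₁ then (((n-2).choose (n₁-2) : ℕ) : ℝ) else 0)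
      = (n₁:ℝ) * ((n₁:ℝ) - 1) * (n.choose n₁ : ℝ) / ((n:ℝ) * ((n:ℝ) - 1)) := by
    by_cases h2 : 2 ≤ n₁
    · rw [if_pos h2]
      have e1 := Nat.add_one_mul_choose_eq (n-2) (n₁-2)
      rw [show n-2+1 = n-1 by omega, show n₁-2+1 = n₁-1 by omega] at e1
      have e3 : n * (n-1) * (n-2).choose (n₁-2) = n.choose n₁ * (n₁ * (n₁-1)) :=
        calc n * (n-1) * (n-2).choose (n₁-2)
            = n * ((n-1) * (n-2).choose (n₁-2)) := by ring
          _ = n * ((n-1).choose (n₁-1) * (n₁-1)) := by rw [e1]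
          _ = (n * (n-1).choose (n₁-1)) * (n₁-1) := by ring
          _ = (n.choose n₁ * n₁) * (n₁-1) := by rw [hAnat]
          _ = _ := by ring
      have c1 : ((n-1:ℕ):ℝ) = (n:ℝ)-1 := by
        rw [Nat.cast_sub (by omega : 1 ≤ n)]; norm_num
      have c2 : ((n₁-1:ℕ):ℝ) = (n₁:ℝ)-1 := by
        rw [Nat.cast_sub (by omega : 1 ≤ n₁)]; norm_num
      have e4 : (n:ℝ) * ((n:ℝ)-1) * (((n-2).choose (n₁-2) : ℕ):ℝ)
          = (n.choose n₁ : ℝ) * ((n₁:ℝ) * ((n₁:ℝ)-1)) := by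
        rw [← c1, ← c2]
        exact_mod_cast congrArg (fun x : ℕ => (x:ℝ)) e3
      rw [eq_div_iff (mul_ne_zero hnne hn1ne)]
      linarith [e4]
    · rw [if_neg h2]
      have hone : n₁ = 1 := by omega
      rw [hone]
      norm_num
  -- reparametrize τhat
  set f : Fin n → ℝ := fun i => y1 i / (n₁:ℝ) + y0 i / (n₀:ℝ) with hf
  set C : ℝ := (1/(n₀:ℝ)) * ∑ i, y0 i with hC
  have hτ : ∀ a : Fin n → Bool,
      τhat a = (∑ i ∈ univ.filter (fun j => a j = true), f i) - C := by
    intro a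
    rw [hτdef a]
    have hsplit : univ.filter (fun i : Fin n => a i = false)
        = univ \ univ.filter (fun j => a j = true) := by
      ext x; simp
    rw [hsplit, Finset.sum_sdiff_eq_sub (filter_subset _ _)]
    simp only [hf, hC]
    rw [Finset.sum_add_distrib, ← Finset.sum_div, ← Finset.sum_div]
    ring
  have hP : ((powersetCard n₁ (univ : Finset (Fin n))).card : ℝ) = ((n.choose n₁ : ℕ) : ℝ) := by
    rw [card_powersetCard, card_univ, Fintype.card_fin]
  have hDcard : ((D.card : ℕ) : ℝ) = ((n.choose n₁ : ℕ) : ℝ) := by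
    rw [hDdef, aux_card_transfer]
  have hsum1 : ∑ a' ∈ D, τhat a'
      = ∑ S ∈ powersetCard n₁ (univ : Finset (Fin n)), ((∑ i ∈ S, f i) - C) := by
    rw [Finset.sum_congr rfl (fun a _ => hτ a), hDdef]
    exact aux_transfer (fun S => (∑ i ∈ S, f i) - C)
  have hsum2 : ∀ b : ℝ, ∑ a ∈ D, (τhat a - b)^2
      = ∑ S ∈ powersetCard n₁ (univ : Finset (Fin n)), ((∑ i ∈ S, f i) - C - b)^2 := by
    intro b
    have hpt : ∀ a ∈ D, (τhat a - b)^2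
        = ((∑ i ∈ univ.filter (fun j => a j = true), f i) - C - b)^2 := by
      intro a _; rw [hτ a]
    rw [Finset.sum_congr rfl hpt, hDdef]
    exact aux_transfer (fun S => ((∑ i ∈ S, f i) - C - b)^2)
  -- the key exact identity
  have key : Var = V1 / (n₁:ℝ) + V0 / (n₀:ℝ)
      - (1/((n:ℝ)*((n:ℝ)-1))) * ∑ i, ((y1 i - y0 i) - (ybar1 - ybar0))^2 := by
    have hVar2 : Var = (1/((n.choose n₁ : ℕ):ℝ)) * ∑ S ∈ powersetCard n₁ (univ:Finset (Fin n)),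
        (((∑ i ∈ S, f i) - C)
          - (1/((n.choose n₁ : ℕ):ℝ)) * ∑ S' ∈ powersetCard n₁ (univ:Finset (Fin n)),
              ((∑ i ∈ S', f i) - C))^2 := by
      rw [hVardef, hDcard, hsum1, hsum2]
    rw [hVar2, aux_varsum _ _ _ hP]
    -- expand moments
    have hm2 : ∑ S ∈ powersetCard n₁ (univ:Finset (Fin n)), ((∑ i ∈ S, f i) - C)^2
        = (((n-1).choose (n₁-1) : ℝ) * ∑ i, (f i)^2
            + (if 2 ≤ n₁ then ((n-2).choose (n₁-2) : ℝ) else 0)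
              * ((∑ i, f i)^2 - ∑ i, (f i)^2))
          - 2*C*(((n-1).choose (n₁-1) : ℝ) * ∑ i, f i)
          + ((n.choose n₁ : ℕ):ℝ) * C^2 := by
      rw [sum_sub_sq, aux_sum2 hn₁pos f, aux_sum1 hn₁pos f, hP]
    have hm1 : ∑ S ∈ powersetCard n₁ (univ:Finset (Fin n)), ((∑ i ∈ S, f i) - C)
        = ((n-1).choose (n₁-1) : ℝ) * (∑ i, f i) - ((n.choose n₁ : ℕ):ℝ) * C := by
      rw [Finset.sum_sub_distrib, aux_sum1 hn₁pos f, Finset.sum_const, nsmul_eq_mul, hP]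
    rw [hm1, hm2, hAeq, hBeq]
    -- expand f-sums
    have hfs1 : ∑ i, f i = (∑ i, y1 i)/(n₁:ℝ) + (∑ i, y0 i)/(n₀:ℝ) := by
      simp only [hf]
      rw [Finset.sum_add_distrib, Finset.sum_div, Finset.sum_div]
    have hfs2 : ∑ i, (f i)^2 = (∑ i, (y1 i)^2)/(n₁:ℝ)^2
        + (2/((n₁:ℝ)*(n₀:ℝ)))*(∑ i, y1 i * y0 i) + (∑ i, (y0 i)^2)/(n₀:ℝ)^2 := by
      simp only [hf]
      have hpt : ∀ i ∈ (univ : Finset (Fin n)), (y1 i/(n₁:ℝ) + y0 i/(n₀:ℝ))^2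
          = (y1 i)^2/(n₁:ℝ)^2 + (2/((n₁:ℝ)*(n₀:ℝ)))*(y1 i * y0 i) + (y0 i)^2/(n₀:ℝ)^2 := by
        intro i _; field_simp; ring
      rw [Finset.sum_congr rfl hpt, Finset.sum_add_distrib, Finset.sum_add_distrib,
        Finset.sum_div, Finset.sum_div, ← Finset.mul_sum]
    -- expand deviation sums
    have hd1 : ∑ i, (y1 i - ybar1)^2
        = ∑ i, (y1 i)^2 - 2*ybar1*(∑ i, y1 i) + (n:ℝ)*ybar1^2 := by
      rw [sum_sub_sq univ y1 ybar1, card_univ, Fintype.card_fin]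
    have hd0 : ∑ i, (y0 i - ybar0)^2
        = ∑ i, (y0 i)^2 - 2*ybar0*(∑ i, y0 i) + (n:ℝ)*ybar0^2 := by
      rw [sum_sub_sq univ y0 ybar0, card_univ, Fintype.card_fin]
    have hdd : ∑ i, ((y1 i - y0 i) - (ybar1 - ybar0))^2
        = (∑ i, (y1 i)^2 - 2*(∑ i, y1 i * y0 i) + ∑ i, (y0 i)^2)
          - 2*(ybar1 - ybar0)*((∑ i, y1 i) - (∑ i, y0 i)) + (n:ℝ)*(ybar1 - ybar0)^2 := by
      rw [sum_sub_sq univ (fun i => y1 i - y0 i) (ybar1 - ybar0), card_univ, Fintype.card_fin]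
      rw [Finset.sum_sub_distrib]
      have hpt : ∀ i ∈ (univ : Finset (Fin n)), (y1 i - y0 i)^2
          = (y1 i)^2 - 2*(y1 i * y0 i) + (y0 i)^2 := fun i _ => by ring
      rw [Finset.sum_congr rfl hpt, Finset.sum_add_distrib, Finset.sum_sub_distrib,
        ← Finset.mul_sum]
    rw [hfs1, hfs2, hV1, hV0, hd1, hd0, hdd, hyb1, hyb0, hC, hKcast]
    have hsubne : (n:ℝ) - (n₁:ℝ) ≠ 0 := by rw [← hKcast]; exact hKne
    set P1 := ∑ i, y1 i with hP1
    set P0 := ∑ i, y0 i with hP0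
    set Q1 := ∑ i, (y1 i)^2 with hQ1
    set Q0 := ∑ i, (y0 i)^2 with hQ0
    set R := ∑ i, y1 i * y0 i with hR
    set M := (n₁:ℝ) with hMdef
    set Nn := (n:ℝ) with hNndef
    set NR := ((n.choose n₁:ℕ):ℝ) with hNRdef
    field_simp
    ring
  -- conclude
  have hQnn : 0 ≤ ∑ i, ((y1 i - y0 i) - (ybar1 - ybar0))^2 :=
    Finset.sum_nonneg (fun i _ => sq_nonneg _)
  have hcoef : 0 < 1/((n:ℝ)*((n:ℝ)-1)) := by
    apply div_pos one_pos
    apply mul_pos <;> linarith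
  constructor
  · rw [key]
    nlinarith [mul_nonneg hcoef.le hQnn]
  · rw [key]
    constructor
    · intro h
      have hQ0 : ∑ i, ((y1 i - y0 i) - (ybar1 - ybar0))^2 = 0 := by
        have h0 : (1/((n:ℝ)*((n:ℝ)-1))) * ∑ i, ((y1 i - y0 i) - (ybar1 - ybar0))^2 = 0 := by
          linarith
        rcases mul_eq_zero.mp h0 with h1 | h1
        · exact absurd h1 hcoef.ne'
        · exact h1
      refine ⟨ybar1 - ybar0, fun i => ?_⟩
      have := (Finset.sum_eq_zero_iff_of_nonneg (fun i _ => sq_nonneg _)).mp hQ0 i (mem_univ i)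
      have h2 := pow_eq_zero_iff (n := 2) (by norm_num) |>.mp this
      linarith [h2]
    · rintro ⟨c, hc⟩
      have hδ : ybar1 - ybar0 = c := by
        rw [hyb1, hyb0, ← mul_sub, ← Finset.sum_sub_distrib]
        rw [Finset.sum_congr rfl (fun i _ => hc i), Finset.sum_const, card_univ,
          Fintype.card_fin, nsmul_eq_mul]
        field_simp
      have hz : ∑ i, ((y1 i - y0 i) - (ybar1 - ybar0))^2 = 0 := by
        apply Finset.sum_eq_zero
        intro i _
        rw [hc i, hδ]
        ring
      rw [hz]
      ring
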